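/- If (V, l_≻, r_≻, l_≺, r_≺) is a representation of an anti-dendriform algebra (A, ≻, ≺), then (V*, -(r_≺* + r_≻*), l_≺*, r_≻*, -(l_≺* + l_≻*)) is also a representation of (A, ≻, ≺), where for f : A → End(V), f* : A → End(V*) is defined by ⟨f*(x)u*, v⟩ = ⟨u*, f(x)v⟩. -/

import Mathlib

open TensorProduct

set_option synthInstance.maxHeartbeats 1000000
set_option maxHeartbeats 1600000

variable {K : Type*} [Field K]

/-- The anti-dendriform algebra identities for two bilinear operations `s` (≻) and `p` (≺):
`x≻(y≻z) = -(x·y)≻z = -x≺(y·z) = (x≺y)≺z` and `(x≻y)≺z = x≻(y≺z)`, where `x·y = x≻y + x≺y`. -/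
def IsAntiDend {M : Type*} [AddCommGroup M] [Module K M]
    (s p : M →ₗ[K] M →ₗ[K] M) : Prop :=
  ∀ x y z : M,
    s x (s y z) = - s (s x y + p x y) z ∧
    s x (s y z) = - p x (s y z + p y z) ∧
    s x (s y z) = p (p x y) z ∧
    p (s x y) z = s x (p y z)

/-- A representation of an anti-dendriform algebra `(M, s, p)` on `V`. -/
def IsAdRep {A V : Type*} [AddCommGroup A] [Module K A] [AddCommGroup V] [Module K V]
    (s p : A →ₗ[K] A →ₗ[K] A)
    (lS rS lP rP : A →ₗ[K] Module.End K V) : Prop :=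
  ∀ x y : A,
    lS x * lS y = - lS (s x y + p x y) ∧
    lS x * lS y = - (lP x * (lS y + lP y)) ∧
    lS x * lS y = lP (p x y) ∧
    rS (s x y) = - (rS y * (rS x + rP x)) ∧
    rS (s x y) = - rP (s x y + p x y) ∧
    rS (s x y) = rP y * rP x ∧
    lS x * rS y = - (rS y * (lS x + lP x)) ∧
    lS x * rS y = - (lP x * (rS y + rP y)) ∧
    lS x * rS y = rP y * lP x ∧
    lP (s x y) = lS x * lP y ∧
    rP y * rS x = rS (p x y) ∧
    rP y * lS x = lS x * rP y

/-- A bimodule of the (not necessarily unital) associative algebra `(A, mul)`. -/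
def IsAssocRep {A V : Type*} [AddCommGroup A] [Module K A] [AddCommGroup V] [Module K V]
    (mul : A →ₗ[K] A →ₗ[K] A)
    (l r : A →ₗ[K] Module.End K V) : Prop :=
  ∀ x y : A,
    l (mul x y) = l x * l y ∧
    r (mul x y) = r y * r x ∧
    l x * r y = r y * l x

variable {A V : Type*} [AddCommGroup A] [Module K A] [AddCommGroup V] [Module K V]

/-- `f ↦ f*`, sending `x` to the transpose of `f x`. -/
noncomputable def starRep (f : A →ₗ[K] Module.End K V) :
    A →ₗ[K] Module.End K (Module.Dual K V) :=
  (Module.Dual.transpose :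
      (V →ₗ[K] V) →ₗ[K] (Module.Dual K V →ₗ[K] Module.Dual K V)) ∘ₗ f

theorem stmt3_Tmul (f g : Module.End K V) :
    Module.Dual.transpose (R := K) (f * g)
      = Module.Dual.transpose (R := K) g * Module.Dual.transpose (R := K) f :=
  Module.Dual.transpose_comp f g

theorem stmt3_Tadd (f g : Module.End K V) :
    Module.Dual.transpose (R := K) (f + g)
      = Module.Dual.transpose (R := K) f + Module.Dual.transpose (R := K) g :=
  map_add _ f g

theorem stmt3_Tneg (f : Module.End K V) :
    Module.Dual.transpose (R := K) (-f) = - Module.Dual.transpose (R := K) f :=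
  map_neg (Module.Dual.transpose (R := K) (M := V) (M' := V)) f


/-- the dual representation
`(V*, -(r_≺* + r_≻*), l_≺*, r_≻*, -(l_≺* + l_≻*))` of an anti-dendriform algebra. -/
theorem stmt3 (s p : A →ₗ[K] A →ₗ[K] A) (h : IsAntiDend s p)
    (lS rS lP rP : A →ₗ[K] Module.End K V)
    (hrep : IsAdRep s p lS rS lP rP) :
    IsAdRep s p (starRep (-(rP + rS))) (starRep lP) (starRep rS)
      (starRep (-(lP + lS))) := by
  intro x y
  obtain ⟨e1, e2, e3, e4, e5, e6, e7, e8, e9, e10, e11, e12⟩ := hrep x y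
  obtain ⟨f1, f2, f3, f4, f5, f6, f7, f8, f9, f10, f11, f12⟩ := hrep y x
  have h4' : rS y * (rS x + rP x) = -(rS (s x y)) := by rw [e4, neg_neg]
  have h5' : rP (s x y + p x y) = -(rS (s x y)) := by rw [e5, neg_neg]
  have h1' : lS (s x y + p x y) = -(lS x * lS y) := by rw [e1, neg_neg]
  have h2' : lP x * (lS y + lP y) = -(lS x * lS y) := by rw [e2, neg_neg]
  have hf7 : rS x * (lS y + lP y) = -(lS y * rS x) := by rw [f7, neg_neg]
  have hf8 : lP y * (rS x + rP x) = -(lS y * rS x) := by rw [f8, neg_neg]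
  have hL : -(rP y + rS y) * -(rP x + rS x) = rS (p x y) := by
    calc -(rP y + rS y) * -(rP x + rS x)
        = rP y * rP x + rP y * rS x + rS y * (rS x + rP x) := by noncomm_ring
      _ = rS (s x y) + rS (p x y) + -(rS (s x y)) := by rw [← e6, e11, h4']
      _ = rS (p x y) := by abel
  have hR : -(lP x + lS x) * -(lP y + lS y) = lP (s x y) := by
    calc -(lP x + lS x) * -(lP y + lS y)
        = lP x * (lS y + lP y) + (lS x * lP y + lS x * lS y) := by noncomm_ring
      _ = lP (s x y) := by rw [h2', ← e10]; abel
  have hM : lP y * -(rP x + rS x) = lS y * rS x := by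
    have h8'' : lP y * (rP x + rS x) = -(lS y * rS x) := by
      rw [f8, neg_neg]; noncomm_ring
    calc lP y * -(rP x + rS x) = -(lP y * (rP x + rS x)) := by noncomm_ring
      _ = lS y * rS x := by rw [h8'', neg_neg]
  refine ⟨?_, ?_, ?_, ?_, ?_, ?_, ?_, ?_, ?_, ?_, ?_, ?_⟩ <;>
    simp only [starRep, LinearMap.comp_apply, LinearMap.neg_apply, LinearMap.add_apply,
      ← stmt3_Tneg, neg_neg, ← stmt3_Tadd, ← stmt3_Tmul]
  · -- 1
    refine congrArg _ ?_
    rw [hL, h5', map_add]; abel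
  · -- 2
    refine congrArg _ ?_
    rw [hL, ← e11]; noncomm_ring
  · -- 3
    refine congrArg _ ?_
    exact hL
  · -- 4
    refine congrArg _ ?_
    rw [e10]; noncomm_ring
  · -- 5
    refine congrArg _ ?_
    rw [h1', map_add, ← e3]; abel
  · -- 6
    refine congrArg _ ?_
    exact hR.symm
  · -- 7
    refine congrArg _ ?_
    rw [hM, f9]; noncomm_ring
  · -- 8
    refine congrArg _ ?_
    rw [hM]; noncomm_ring
  · -- 9
    refine congrArg _ ?_
    rw [hM, f7]; noncomm_ring
  · -- 10
    refine congrArg _ ?_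
    rw [e4]; noncomm_ring
  · -- 11
    refine congrArg _ ?_
    calc lP x * -(lP y + lS y) = -(lP x * (lS y + lP y)) := by noncomm_ring
      _ = lP (p x y) := by rw [h2', neg_neg, e3]
  · -- 12
    refine congrArg _ ?_
    calc -(rP x + rS x) * -(lP y + lS y)
        = rP x * lP y + rP x * lS y + rS x * (lS y + lP y) := by noncomm_ring
      _ = lS y * rS x + lS y * rP x + -(lS y * rS x) := by rw [← f9, f12, hf7]
      _ = lP y * (rS x + rP x) + (lS y * rP x + lS y * rS x) := by rw [hf8]; abel
      _ = -(lP y + lS y) * -(rP x + rS x) := by noncomm_ring
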